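/- Let σ > 0, A₀ > 0, t > 0, w > 0, let U be a real random variable with law N(0, σ²), and define h_g := A₀·exp(−2U²/(t·w²)). Set ϖ := t·w²/(4σ²). Then the law of h_g is absolutely continuous with respect to Lebesgue measure with density f(x) = (√ϖ/(√π·A₀)) · (ln(A₀/x))^{−1/2} · (x/A₀)^{ϖ−1} for 0 < x < A₀, and f(x) = 0 otherwise. -/

import Mathlib

open Real MeasureTheory ProbabilityTheory Set

private theorem cov_aux {s : Set ℝ} {f f' : ℝ → ℝ}
    (hs : MeasurableSet s) (hf' : ∀ x ∈ s, HasDerivWithinAt f (f' x) s x)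
    (hf : Set.InjOn f s) (g : ℝ → ENNReal) :
    ∫⁻ x in f '' s, g x = ∫⁻ x in s, ENNReal.ofReal |f' x| * g (f x) := by
  simpa only [ContinuousLinearMap.det_toSpanSingleton] using
    MeasureTheory.lintegral_image_eq_lintegral_abs_det_fderiv_mul volume hs
      (fun x hx => (hf' x hx).hasFDerivWithinAt) hf g

theorem GML_pdf_2D {α : Type*} [MeasurableSpace α]
    (P : Measure α) [IsProbabilityMeasure P]
    (σ A₀ t w : ℝ) (hσ : 0 < σ) (hA₀ : 0 < A₀) (ht : 0 < t) (hw : 0 < w)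
    (U : α → ℝ) (hU : Measurable U)
    (hlaw : Measure.map U P = gaussianReal 0 (σ ^ 2).toNNReal)
    (ϖ : ℝ) (hϖ : ϖ = t * w ^ 2 / (4 * σ ^ 2)) :
    Measure.map (fun ω => A₀ * Real.exp (-2 * (U ω) ^ 2 / (t * w ^ 2))) P
      = volume.withDensity (fun x => ENNReal.ofReal (
          if 0 < x ∧ x < A₀ then
            (Real.sqrt ϖ / (Real.sqrt π * A₀)) * (Real.log (A₀ / x)) ^ (-(1:ℝ) / 2)
              * (x / A₀) ^ (ϖ - 1)
          else 0)) := by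
  have hσ2 : (0:ℝ) < σ ^ 2 := by positivity
  set v : NNReal := (σ ^ 2).toNNReal with hv_def
  have hv : v ≠ 0 := by
    simp only [hv_def, ne_eq, Real.toNNReal_eq_zero, not_le]
    exact hσ2
  have hvr : (v : ℝ) = σ ^ 2 := Real.coe_toNNReal _ hσ2.le
  have htw : (0:ℝ) < t * w ^ 2 := by positivity
  set k : ℝ := 2 / (t * w ^ 2) with hk_def
  have hk : 0 < k := by positivity
  have hϖpos : 0 < ϖ := by rw [hϖ]; positivity
  have hkϖ : k * ϖ = 1 / (2 * σ ^ 2) := by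
    rw [hk_def, hϖ]; field_simp; ring
  set g : ℝ → ℝ := fun u => A₀ * Real.exp (-(k * u ^ 2)) with hg_def
  set g' : ℝ → ℝ := fun u => A₀ * (Real.exp (-(k * u ^ 2)) * (-(k * (2 * u)))) with hg'_def
  set fd : ℝ → ENNReal := fun x => ENNReal.ofReal (
          if 0 < x ∧ x < A₀ then
            (Real.sqrt ϖ / (Real.sqrt π * A₀)) * (Real.log (A₀ / x)) ^ (-(1:ℝ) / 2)
              * (x / A₀) ^ (ϖ - 1)
          else 0) with hfd_def
  have hgmeas : Measurable g := by
    apply Measurable.const_mul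
    exact (measurable_id.pow_const 2 |>.const_mul k |>.neg).exp
  have hcomp : (fun ω => A₀ * Real.exp (-2 * (U ω) ^ 2 / (t * w ^ 2))) = g ∘ U := by
    funext ω
    simp only [hg_def, Function.comp_apply]
    congr 1
    rw [hk_def]
    ring
  rw [hcomp, ← Measure.map_map hgmeas hU, hlaw]
  -- basic facts about g
  have hgpos : ∀ u, 0 < g u := fun u => by positivity
  have hgleA : ∀ u, g u ≤ A₀ := by
    intro u
    have h1 : Real.exp (-(k * u ^ 2)) ≤ 1 :=
      Real.exp_le_one_iff.mpr (neg_nonpos.mpr (by positivity))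
    simpa [hg_def] using mul_le_mul_of_nonneg_left h1 hA₀.le
  have hganti : ∀ a b : ℝ, 0 ≤ a → a < b → g b < g a := by
    intro a b ha hab
    simp only [hg_def]
    apply mul_lt_mul_of_pos_left _ hA₀
    apply Real.exp_lt_exp.mpr
    have h2 : a ^ 2 < b ^ 2 := by nlinarith
    nlinarith
  have hginj : ∀ u₀ : ℝ, 0 ≤ u₀ → Set.InjOn g (Ici u₀) := by
    intro u₀ hu₀ a ha b hb hab
    by_contra hne
    rcases lt_or_gt_of_ne hne with h | h
    · exact absurd hab (hganti a b (hu₀.trans ha) h).ne'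
    · exact absurd hab (hganti b a (hu₀.trans hb) h).ne
  have hgderiv : ∀ (u : ℝ) (s : Set ℝ), HasDerivWithinAt g (g' u) s u := by
    intro u s
    have h1 : HasDerivAt (fun x : ℝ => -(k * x ^ 2)) (-(k * (2 * u))) u := by
      exact (((hasDerivAt_pow 2 u).const_mul k).neg).congr_deriv (by simp)
    exact ((h1.exp).const_mul A₀).hasDerivWithinAt
  have hglog : ∀ u : ℝ, Real.log (A₀ / g u) = k * u ^ 2 := by
    intro u
    simp only [hg_def]
    rw [div_mul_eq_div_div, div_self hA₀.ne', one_div, Real.log_inv, Real.log_exp, neg_neg]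
  -- inverse function
  set c : ℝ → ℝ := fun a => Real.sqrt (Real.log (A₀ / a) / k) with hc_def
  have hcnonneg : ∀ a, 0 ≤ c a := fun a => Real.sqrt_nonneg _
  have hgc : ∀ a, 0 < a → a ≤ A₀ → g (c a) = a := by
    intro a ha haA
    have hlog : 0 ≤ Real.log (A₀ / a) := Real.log_nonneg (by rw [le_div_iff₀ ha]; linarith)
    simp only [hg_def, hc_def]
    rw [Real.sq_sqrt (by positivity), mul_div_cancel₀ _ hk.ne', Real.exp_neg,
      Real.exp_log (by positivity)]
    field_simp
  have himg : ∀ u₀ : ℝ, 0 ≤ u₀ → g '' (Ici u₀) = Ioc 0 (g u₀) := by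
    intro u₀ hu₀
    ext x
    simp only [mem_image, mem_Ici, mem_Ioc]
    constructor
    · rintro ⟨u, hu, rfl⟩
      refine ⟨hgpos u, ?_⟩
      rcases eq_or_lt_of_le hu with h | h
      · rw [← h]
      · exact (hganti u₀ u hu₀ h).le
    · rintro ⟨hx0, hxle⟩
      have hxA : x ≤ A₀ := hxle.trans (hgleA u₀)
      refine ⟨c x, ?_, hgc x hx0 hxA⟩
      have h1 : Real.log (A₀ / g u₀) ≤ Real.log (A₀ / x) :=
        Real.log_le_log (by positivity) (div_le_div_of_nonneg_left hA₀.le hx0 hxle)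
      rw [hglog u₀] at h1
      have h2 : u₀ ^ 2 ≤ Real.log (A₀ / x) / k := by
        rw [le_div_iff₀ hk]; linarith
      calc u₀ = Real.sqrt (u₀ ^ 2) := (Real.sqrt_sq hu₀).symm
        _ ≤ c x := Real.sqrt_le_sqrt h2
  have hpre : ∀ a : ℝ, 0 < a → a ≤ A₀ → g ⁻¹' (Iic a) = Iic (-(c a)) ∪ Ici (c a) := by
    intro a ha haA
    ext u
    simp only [mem_preimage, mem_Iic, mem_union, mem_Ici]
    have h1 : g u ≤ a ↔ Real.log (A₀ / a) ≤ Real.log (A₀ / g u) := by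
      rw [Real.log_le_log_iff (by positivity) (by positivity),
        div_le_div_iff_of_pos_left hA₀ ha (hgpos u)]
    rw [h1, hglog u]
    have h3 : Real.log (A₀ / a) ≤ k * u ^ 2 ↔ c a ≤ |u| := by
      rw [hc_def]
      rw [Real.sqrt_le_left (abs_nonneg u), sq_abs, div_le_iff₀ hk]
      constructor <;> intro h <;> linarith
    rw [h3, le_abs]
    constructor
    · rintro (h | h)
      · exact Or.inr h
      · exact Or.inl (by linarith)
    · rintro (h | h)
      · exact Or.inr (by linarith)
      · exact Or.inl (by linarith)
  -- symmetry of the gaussian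
  have hsym : ∀ s : Set ℝ, MeasurableSet s →
      gaussianReal 0 v ((fun x : ℝ => -x) ⁻¹' s) = gaussianReal 0 v s := by
    intro s hs
    have h := gaussianReal_map_const_mul (μ := 0) (v := v) (-1)
    have h1 : NNReal.mk ((-1:ℝ)^2) (sq_nonneg _) = 1 := by ext; norm_num
    rw [h1, one_mul, mul_zero] at h
    conv_rhs => rw [← h]
    rw [Measure.map_apply (measurable_const_mul _) hs]
    congr 1
    ext x; simp
  -- pointwise identity
  have hpt : ∀ u : ℝ, 0 < u →
      ENNReal.ofReal |g' u| * fd (g u) = 2 * gaussianPDF 0 v u := by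
    intro u hu
    have hE : (0:ℝ) < Real.exp (-(k * u ^ 2)) := Real.exp_pos _
    have hcond : 0 < g u ∧ g u < A₀ := by
      refine ⟨hgpos u, ?_⟩
      have h1 : Real.exp (-(k * u ^ 2)) < 1 :=
        Real.exp_lt_one_iff.mpr (neg_lt_zero.mpr (by positivity))
      calc g u = A₀ * Real.exp (-(k * u ^ 2)) := rfl
        _ < A₀ * 1 := mul_lt_mul_of_pos_left h1 hA₀
        _ = A₀ := mul_one A₀
    have habs : |g' u| = A₀ * (Real.exp (-(k * u ^ 2)) * (k * (2 * u))) := by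
      have h2 : g' u = -(A₀ * (Real.exp (-(k * u ^ 2)) * (k * (2 * u)))) := by
        simp only [hg'_def]; ring
      rw [h2, abs_neg, abs_of_nonneg (by positivity)]
    have hsqk : Real.sqrt k * Real.sqrt ϖ = (Real.sqrt 2 * σ)⁻¹ := by
      rw [← Real.sqrt_mul hk.le, hkϖ, one_div, Real.sqrt_inv,
        Real.sqrt_mul (by norm_num : (0:ℝ) ≤ 2), Real.sqrt_sq hσ.le]
    have hsqk' : Real.sqrt k * Real.sqrt ϖ * (Real.sqrt 2 * σ) = 1 := by
      rw [hsqk]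
      exact inv_mul_cancel₀ (by positivity)
    have h2π : Real.sqrt (2 * π * (v:ℝ)) = Real.sqrt 2 * Real.sqrt π * σ := by
      rw [hvr, Real.sqrt_mul (by positivity), Real.sqrt_sq hσ.le,
        Real.sqrt_mul (by norm_num : (0:ℝ) ≤ 2)]
    have hreal : |g' u| * ((Real.sqrt ϖ / (Real.sqrt π * A₀))
          * (Real.log (A₀ / g u)) ^ (-(1:ℝ)/2) * (g u / A₀) ^ (ϖ - 1))
        = 2 * gaussianPDFReal 0 v u := by
      rw [habs, hglog u]
      have hdiv : g u / A₀ = Real.exp (-(k * u ^ 2)) := by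
        simp only [hg_def]
        exact mul_div_cancel_left₀ _ hA₀.ne'
      rw [hdiv]
      rw [show (-(1:ℝ)/2) = -(1/2) by norm_num, Real.rpow_neg (by positivity),
        ← Real.sqrt_eq_rpow, Real.sqrt_mul hk.le, Real.sqrt_sq hu.le]
      rw [Real.rpow_def_of_pos hE, Real.log_exp]
      have hexp : Real.exp (-(k * u ^ 2)) * Real.exp (-(k * u ^ 2) * (ϖ - 1))
          = Real.exp (-(u - 0) ^ 2 / (2 * (v:ℝ))) := by
        rw [← Real.exp_add]
        congr 1
        rw [hvr, div_eq_mul_inv, ← one_div (2 * σ ^ 2), ← hkϖ]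
        ring
      have hpdf : gaussianPDFReal 0 v u
          = (Real.sqrt (2 * π * (v:ℝ)))⁻¹ * Real.exp (-(u - 0) ^ 2 / (2 * (v:ℝ))) := rfl
      have hcoef : A₀ * (k * (2 * u))
            * (Real.sqrt ϖ / (Real.sqrt π * A₀) * (Real.sqrt k * u)⁻¹)
          = 2 * (Real.sqrt 2 * Real.sqrt π * σ)⁻¹ := by
        have h0k : (0:ℝ) < Real.sqrt k := Real.sqrt_pos.mpr hk
        have h0π : (0:ℝ) < Real.sqrt π := Real.sqrt_pos.mpr Real.pi_pos
        have h02 : (0:ℝ) < Real.sqrt 2 := by positivity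
        have hksq : Real.sqrt k ^ 2 = k := Real.sq_sqrt hk.le
        clear_value k
        nth_rewrite 1 [show k = Real.sqrt k * Real.sqrt k from (Real.mul_self_sqrt hk.le).symm]
        field_simp
        linear_combination hsqk'
      rw [hpdf, h2π]
      calc A₀ * (Real.exp (-(k * u ^ 2)) * (k * (2 * u)))
            * (Real.sqrt ϖ / (Real.sqrt π * A₀) * (Real.sqrt k * u)⁻¹
              * Real.exp (-(k * u ^ 2) * (ϖ - 1)))
          = (A₀ * (k * (2 * u)) * (Real.sqrt ϖ / (Real.sqrt π * A₀) * (Real.sqrt k * u)⁻¹))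
            * (Real.exp (-(k * u ^ 2)) * Real.exp (-(k * u ^ 2) * (ϖ - 1))) := by ring
        _ = (2 * (Real.sqrt 2 * Real.sqrt π * σ)⁻¹)
            * Real.exp (-(u - 0) ^ 2 / (2 * (v:ℝ))) := by rw [hcoef, hexp]
        _ = 2 * ((Real.sqrt 2 * Real.sqrt π * σ)⁻¹
            * Real.exp (-(u - 0) ^ 2 / (2 * (v:ℝ)))) := by ring
    simp only [hfd_def]
    rw [if_pos hcond, ← ENNReal.ofReal_mul (abs_nonneg _), hreal,
      ENNReal.ofReal_mul (by norm_num : (0:ℝ) ≤ 2)]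
    rw [gaussianPDF]
    norm_num
  -- reduction of the density integral to (0, A₀)
  have hred : ∀ s : Set ℝ, MeasurableSet s →
      ∫⁻ x in s, fd x = ∫⁻ x in Ioo 0 A₀ ∩ s, fd x := by
    intro s hs
    have hind : ∀ x, fd x = (Ioo 0 A₀).indicator fd x := by
      intro x
      by_cases hx : 0 < x ∧ x < A₀
      · rw [indicator_of_mem (mem_Ioo.mpr hx)]
      · rw [indicator_of_notMem (by simpa [mem_Ioo] using hx)]
        simp only [hfd_def]
        rw [if_neg hx, ENNReal.ofReal_zero]
    calc ∫⁻ x in s, fd x = ∫⁻ x in s, (Ioo 0 A₀).indicator fd x := lintegral_congr hind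
      _ = ∫⁻ x in Ioo 0 A₀, fd x ∂(volume.restrict s) := lintegral_indicator measurableSet_Ioo fd
      _ = ∫⁻ x in Ioo 0 A₀ ∩ s, fd x := by rw [Measure.restrict_restrict measurableSet_Ioo]
  haveI : IsProbabilityMeasure (Measure.map g (gaussianReal 0 v)) :=
    Measure.isProbabilityMeasure_map hgmeas.aemeasurable
  refine Measure.ext_of_Iic (Measure.map g (gaussianReal 0 v)) _ (fun a => ?_)
  rw [Measure.map_apply hgmeas measurableSet_Iic, withDensity_apply _ measurableSet_Iic,
    hred _ measurableSet_Iic]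
  rcases le_or_gt a 0 with ha0 | ha0
  · have h1 : g ⁻¹' (Iic a) = ∅ := by
      ext u
      simp only [mem_preimage, mem_Iic, mem_empty_iff_false, iff_false, not_le]
      exact lt_of_le_of_lt ha0 (hgpos u)
    have h2 : Ioo 0 A₀ ∩ Iic a = ∅ := by
      ext x
      simp only [mem_inter_iff, mem_Ioo, mem_Iic, mem_empty_iff_false, iff_false, not_and]
      rintro ⟨hx1, _⟩ hx2
      linarith
    rw [h1, h2]
    simp
  rcases lt_or_ge a A₀ with haA | haA
  · -- 0 < a < A₀
    have hca : 0 < c a := by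
      apply Real.sqrt_pos.mpr
      apply div_pos _ hk
      apply Real.log_pos
      rw [lt_div_iff₀ ha0]
      linarith
    have hset : Ioo 0 A₀ ∩ Iic a = Ioc 0 a := by
      ext x
      simp only [mem_inter_iff, mem_Ioo, mem_Iic, mem_Ioc]
      constructor
      · rintro ⟨⟨h1, _⟩, h2⟩; exact ⟨h1, h2⟩
      · rintro ⟨h1, h2⟩; exact ⟨⟨h1, lt_of_le_of_lt h2 haA⟩, h2⟩
    have hdisj : Disjoint (Iic (-(c a))) (Ici (c a)) := by
      rw [Set.Iic_disjoint_Ici]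
      intro h
      linarith
    have hIic : gaussianReal 0 v (Iic (-(c a))) = gaussianReal 0 v (Ici (c a)) := by
      rw [← hsym (Iic (-(c a))) measurableSet_Iic]
      congr 1
      ext x
      simp only [mem_preimage, mem_Iic, mem_Ici, neg_le_neg_iff]
    rw [hset, hpre a ha0 haA.le,
      show Ioc 0 a = g '' (Ici (c a)) by rw [himg _ (hcnonneg a), hgc a ha0 haA.le],
      cov_aux measurableSet_Ici (fun x _ => hgderiv x _) (hginj _ (hcnonneg a)) fd,
      measure_union hdisj measurableSet_Ici, hIic,
      setLIntegral_congr_fun measurableSet_Ici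
        (fun u hu => hpt u (lt_of_lt_of_le hca hu)),
      lintegral_const_mul 2 (measurable_gaussianPDF 0 v),
      ← gaussianReal_apply 0 hv (Ici (c a)), two_mul]
  · -- A₀ ≤ a
    have h1 : g ⁻¹' (Iic a) = univ := by
      ext u
      simp only [mem_preimage, mem_Iic, mem_univ, iff_true]
      exact (hgleA u).trans haA
    have h2 : Ioo 0 A₀ ∩ Iic a = Ioo 0 A₀ := by
      apply inter_eq_left.mpr
      intro x hx
      exact le_trans (le_of_lt hx.2) haA
    have h3 : ∫⁻ x in Ioo 0 A₀, fd x = ∫⁻ x in Ioc 0 A₀, fd x := by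
      rw [hred _ measurableSet_Ioc, inter_eq_left.mpr Ioo_subset_Ioc_self]
    have hg0 : g 0 = A₀ := by simp [hg_def]
    have hγ0 : gaussianReal 0 v ({0} : Set ℝ) = 0 :=
      gaussianReal_absolutelyContinuous 0 hv (Real.volume_singleton)
    have h5 : gaussianReal 0 v (Ioi (0:ℝ)) = gaussianReal 0 v (Ici (0:ℝ)) :=
      measure_congr (MeasureTheory.Ioi_ae_eq_Ici' hγ0)
    have h6 : gaussianReal 0 v (Iio (0:ℝ)) = gaussianReal 0 v (Ici (0:ℝ)) := by
      have h7 : gaussianReal 0 v (Iic (0:ℝ)) = gaussianReal 0 v (Iio (0:ℝ)) :=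
        (measure_congr (MeasureTheory.Iio_ae_eq_Iic' hγ0)).symm
      have h8 : gaussianReal 0 v (Ici (0:ℝ)) = gaussianReal 0 v (Iic (0:ℝ)) := by
        rw [← hsym (Iic (0:ℝ)) measurableSet_Iic]
        congr 1
        ext x
        simp [neg_nonpos]
      rw [← h7, ← h8]
    have hcompl : gaussianReal 0 v (Ici (0:ℝ)) + gaussianReal 0 v (Iio (0:ℝ)) = 1 := by
      rw [← Set.compl_Ici, measure_add_measure_compl measurableSet_Ici]
      exact measure_univ
    rw [h1, h2, measure_univ, h3,
      show Ioc 0 A₀ = g '' (Ici (0:ℝ)) by rw [himg 0 le_rfl, hg0],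
      cov_aux measurableSet_Ici (fun x _ => hgderiv x _) (hginj 0 le_rfl) fd,
      ← Measure.restrict_congr_set Ioi_ae_eq_Ici,
      setLIntegral_congr_fun measurableSet_Ioi (fun u hu => hpt u hu),
      lintegral_const_mul 2 (measurable_gaussianPDF 0 v),
      ← gaussianReal_apply 0 hv (Ioi (0:ℝ)), h5, two_mul, ← h6 ]
    nth_rewrite 2 [h6]
    rw [add_comm]
    exact hcompl.symm
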